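/- Let (D_λ)_{λ∈Λ} be a family of integral domains of finite character (every nonzero element lies in only finitely many maximal ideals), none of which is a field, and let R = ∏_{λ∈Λ} D_λ. Then the maximal ideals of R are exactly the ideals of the form (U), where U is an ultrafilter in the Boolean algebra B containing an element Y = (Y_λ)_{λ∈Λ} such that Y_λ is a finite set for all λ ∈ Λ. -/

import Mathlib

/-!
Common setup: `Λ` is an index set, `D λ` a family of commutative rings,
`R = ∏ λ, D λ` the product ring, and
`B = ∏ λ, P(max (D λ))` the product Boolean algebra of the power sets of the
sets of maximal ideals, realized as the Pi type `∀ l, Set (MaximalSpectrum (D l))`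
with its componentwise Boolean algebra structure (meet = componentwise ∩,
join = componentwise ∪, `⊥ = (∅)_λ`, complement componentwise, order = componentwise ⊆).
-/

variable {Λ : Type*} {D : Λ → Type*}

/-- `S(a) = (V(a_λ))_λ ∈ B`, where `V(x)` is the set of maximal ideals containing `x`. -/
def SFam [∀ l, CommRing (D l)] (a : ∀ l, D l) : ∀ l, Set (MaximalSpectrum (D l)) :=
  fun l => {P | a l ∈ P.asIdeal}

/-- `z(x) = {λ | x_λ = 0}`. -/
def ZFam [∀ l, CommRing (D l)] (x : ∀ l, D l) : Set Λ := {l | x l = 0}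

/-- A filter in a Boolean algebra: a nonempty subset not containing `⊥`, closed
under meets, and upward closed. -/
def IsBFilter {B : Type*} [BooleanAlgebra B] (U : Set B) : Prop :=
  U.Nonempty ∧ ⊥ ∉ U ∧ (∀ X ∈ U, ∀ Y ∈ U, X ⊓ Y ∈ U) ∧ (∀ Y ∈ U, ∀ Z, Y ≤ Z → Z ∈ U)

/-- An ultrafilter in a Boolean algebra: a filter containing `Y` or `Yᶜ` for every `Y`. -/
def IsBUltrafilter {B : Type*} [BooleanAlgebra B] (U : Set B) : Prop :=
  IsBFilter U ∧ ∀ Y, Y ∈ U ∨ Yᶜ ∈ U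

/-- Property (+): for all `r` and all nonzero `a` there is `d` lying in every maximal
ideal containing `a` but not `r`, and in no maximal ideal containing `r`. -/
def PropertyPlus (A : Type*) [CommRing A] : Prop :=
  ∀ r a : A, a ≠ 0 → ∃ d : A,
    (∀ M : Ideal A, M.IsMaximal → a ∈ M → r ∉ M → d ∈ M) ∧
    (∀ M : Ideal A, M.IsMaximal → r ∈ M → d ∉ M)

/-- Property (++): for every `r` there is `d` with `D(r) = V(d)`, i.e. the maximal
ideals containing `d` are exactly those not containing `r`. -/
def PropertyPlusPlus (A : Type*) [CommRing A] : Prop :=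
  ∀ r : A, ∃ d : A, ∀ P : MaximalSpectrum A, d ∈ P.asIdeal ↔ r ∉ P.asIdeal

section Helpers

variable {A : Type*} [CommRing A]

lemma span_pair_exists_one {a b : A}
    (h : ∀ P : MaximalSpectrum A, ¬(a ∈ P.asIdeal ∧ b ∈ P.asIdeal)) :
    ∃ x y : A, x * a + y * b = 1 := by
  have hs : Ideal.span ({a, b} : Set A) = ⊤ := by
    by_contra hne
    obtain ⟨Q, hQ, hle⟩ := Ideal.exists_le_maximal _ hne
    exact h ⟨Q, hQ⟩ ⟨hle (Ideal.subset_span (by simp)), hle (Ideal.subset_span (by simp))⟩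
  exact Ideal.mem_span_pair.mp (hs ▸ Submodule.mem_top : (1:A) ∈ Ideal.span ({a,b} : Set A))

lemma span_triple_exists_one {a b c : A}
    (h : ∀ P : MaximalSpectrum A, ¬(a ∈ P.asIdeal ∧ b ∈ P.asIdeal ∧ c ∈ P.asIdeal)) :
    ∃ x y z : A, x * a + y * b + z * c = 1 := by
  have hs : Ideal.span ({a, b, c} : Set A) = ⊤ := by
    by_contra hne
    obtain ⟨Q, hQ, hle⟩ := Ideal.exists_le_maximal _ hne
    exact h ⟨Q, hQ⟩ ⟨hle (Ideal.subset_span (by simp)), hle (Ideal.subset_span (by simp)),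
      hle (Ideal.subset_span (by simp))⟩
  have h1 : (1:A) ∈ Ideal.span (insert a ({b, c} : Set A)) := hs ▸ Submodule.mem_top
  rw [Ideal.mem_span_insert] at h1
  obtain ⟨x, w, hw, hxw⟩ := h1
  obtain ⟨y, z, hyz⟩ := Ideal.mem_span_pair.mp hw
  exact ⟨x, y, z, by rw [mul_comm x a] at hxw; linear_combination hyz - hxw⟩

lemma exists_mem_avoid [Nontrivial A] {F : Set (MaximalSpectrum A)} (hF : F.Finite)
    (I : Ideal A) (hI : ∀ P ∈ F, ¬ I ≤ P.asIdeal) :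
    ∃ c ∈ I, ∀ P ∈ F, c ∉ P.asIdeal := by
  obtain ⟨P0⟩ : Nonempty (MaximalSpectrum A) := inferInstance
  have hp : ∀ P ∈ hF.toFinset, P ≠ P0 → P ≠ P0 → (MaximalSpectrum.asIdeal P).IsPrime :=
    fun P _ _ _ => P.isMaximal.isPrime
  have hiff := Ideal.subset_union_prime (s := hF.toFinset)
    (f := MaximalSpectrum.asIdeal) P0 P0 hp (I := I)
  have hnot : ¬ ∃ P ∈ hF.toFinset, I ≤ P.asIdeal := by
    rintro ⟨P, hPs, hle⟩; exact hI P (hF.mem_toFinset.mp hPs) hle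
  have hsub := hiff.not.mpr hnot
  rw [Set.not_subset] at hsub
  obtain ⟨c, hcI, hc⟩ := hsub
  refine ⟨c, hcI, fun P hP hc' => hc ?_⟩
  exact Set.mem_biUnion (by simpa using hF.mem_toFinset.mpr hP) hc'

lemma exists_realize [Nontrivial A] {G F' : Set (MaximalSpectrum A)} (hG : G.Finite)
    (hF' : F'.Finite) (hd : ∀ P ∈ F', P ∉ G) :
    ∃ r : A, (∀ P ∈ G, r ∈ P.asIdeal) ∧ (∀ Q ∈ F', r ∉ Q.asIdeal) := by
  set I : Ideal A := hG.toFinset.inf MaximalSpectrum.asIdeal with hIdef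
  have hI : ∀ Q ∈ F', ¬ I ≤ Q.asIdeal := by
    intro Q hQ hle
    obtain ⟨P, hPs, hPle⟩ := (Ideal.IsPrime.inf_le' Q.isMaximal.isPrime).mp hle
    have heq : P.asIdeal = Q.asIdeal := P.isMaximal.eq_of_le Q.isMaximal.ne_top hPle
    have hPQ : P = Q := MaximalSpectrum.ext heq
    exact hd Q hQ (hPQ ▸ hG.mem_toFinset.mp hPs)
  obtain ⟨c, hcI, hc⟩ := exists_mem_avoid hF' I hI
  exact ⟨c, fun P hP => (Finset.inf_le (hG.mem_toFinset.mpr hP) : I ≤ P.asIdeal) hcI, hc⟩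

end Helpers

/-- If every `D l` is an integral domain of finite character (every nonzero element
lies in only finitely many maximal ideals), not a field, then the maximal ideals of
`R` are exactly the ideals `(U)` for ultrafilters `U` in `B` containing an element
`Y` all of whose components are finite sets. -/
theorem stmt_9 [∀ l, CommRing (D l)] [∀ l, IsDomain (D l)]
    (hnf : ∀ l, ¬IsField (D l))
    (hfc : ∀ l, ∀ a : D l, a ≠ 0 → {P : MaximalSpectrum (D l) | a ∈ P.asIdeal}.Finite) :
    (∀ M : Ideal (∀ l, D l), M.IsMaximal →
      ∃ U : Set (∀ l, Set (MaximalSpectrum (D l))), IsBUltrafilter U ∧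
        (∃ Y ∈ U, ∀ l, (Y l).Finite) ∧
        ∀ r : ∀ l, D l, r ∈ M ↔ SFam r ∈ U) ∧
    (∀ U : Set (∀ l, Set (MaximalSpectrum (D l))), IsBUltrafilter U →
      (∃ Y ∈ U, ∀ l, (Y l).Finite) →
      ∃ M : Ideal (∀ l, D l), M.IsMaximal ∧ ∀ r : ∀ l, D l, r ∈ M ↔ SFam r ∈ U) := by
  constructor
  · -- Direction 1: maximal ideal gives ultrafilter
    intro M hM
    have hMne : M ≠ ⊤ := hM.ne_top
    -- nonzero nonunits in each component
    have hpex : ∀ l, ∃ p : D l, p ≠ 0 ∧ ¬ IsUnit p := by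
      intro l
      obtain ⟨I, hbot, htop⟩ :=
        Ring.not_isField_iff_exists_ideal_bot_lt_and_lt_top.mp (hnf l)
      obtain ⟨q, hqI, hq0⟩ := SetLike.exists_of_lt hbot
      exact ⟨q, by simpa [Ideal.mem_bot] using hq0,
        fun hu => htop.ne (Ideal.eq_top_of_isUnit_mem _ hqI hu)⟩
    choose p hp0 hpu using hpex
    -- contradiction lemmas
    have pairC : ∀ m ∈ M, ∀ n ∈ M,
        (∀ l, ∀ P : MaximalSpectrum (D l), ¬(m l ∈ P.asIdeal ∧ n l ∈ P.asIdeal)) → False := by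
      intro m hm n hn h
      have hx : ∀ l, ∃ x y : D l, x * m l + y * n l = 1 :=
        fun l => span_pair_exists_one (h l)
      choose x y hxy using hx
      have h1 : (1 : ∀ l, D l) ∈ M := by
        have : x * m + y * n = (1 : ∀ l, D l) := funext fun l => hxy l
        rw [← this]
        exact M.add_mem (M.mul_mem_left x hm) (M.mul_mem_left y hn)
      exact hMne ((Ideal.eq_top_iff_one M).mpr h1)
    have tripleC : ∀ m ∈ M, ∀ n ∈ M, ∀ k ∈ M,
        (∀ l, ∀ P : MaximalSpectrum (D l),
          ¬(m l ∈ P.asIdeal ∧ n l ∈ P.asIdeal ∧ k l ∈ P.asIdeal)) → False := by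
      intro m hm n hn k hk h
      have hx : ∀ l, ∃ x y z : D l, x * m l + y * n l + z * k l = 1 :=
        fun l => span_triple_exists_one (h l)
      choose x y z hxyz using hx
      have h1 : (1 : ∀ l, D l) ∈ M := by
        have : x * m + y * n + z * k = (1 : ∀ l, D l) := funext fun l => hxyz l
        rw [← this]
        exact M.add_mem (M.add_mem (M.mul_mem_left x hm) (M.mul_mem_left y hn))
          (M.mul_mem_left z hk)
      exact hMne ((Ideal.eq_top_iff_one M).mpr h1)
    -- full support element of M
    have hfull : ∃ t ∈ M, ∀ l, t l ≠ 0 := by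
      by_contra hcon
      push_neg at hcon
      have hpM : p ∉ M := fun hpm => (hcon p hpm).elim fun l hl => hp0 l hl
      obtain ⟨y, i, hiM, hyi⟩ := hM.exists_inv hpM
      obtain ⟨l, hl⟩ := hcon i hiM
      have h1 : y l * p l + i l = 1 := congrFun hyi l
      rw [hl, add_zero] at h1
      exact hpu l (IsUnit.of_mul_eq_one _ (by rw [mul_comm] at h1; exact h1))
    obtain ⟨t, htM, ht0⟩ := hfull
    have hFfin : ∀ l, {P : MaximalSpectrum (D l) | t l ∈ P.asIdeal}.Finite :=
      fun l => hfc l (t l) (ht0 l)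
    refine ⟨{Y | ∃ m ∈ M, ∀ l, ∀ P : MaximalSpectrum (D l),
        m l ∈ P.asIdeal → t l ∈ P.asIdeal → P ∈ Y l}, ⟨⟨?_, ?_, ?_, ?_⟩, ?_⟩, ?_, ?_⟩
    · -- nonempty
      exact ⟨fun _ => Set.univ, 0, M.zero_mem, fun l P _ _ => Set.mem_univ P⟩
    · -- ⊥ ∉ U
      rintro ⟨m, hm, h⟩
      exact pairC m hm t htM fun l P hP => (h l P hP.1 hP.2 : P ∈ (∅ : Set _))
    · -- meets
      rintro X ⟨m1, hm1, h1⟩ Y ⟨m2, hm2, h2⟩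
      have key : ∀ l, ∃ c : D l, c ∈ Ideal.span ({m1 l, m2 l} : Set (D l)) ∧
          ∀ P : MaximalSpectrum (D l), t l ∈ P.asIdeal →
            (m1 l ∉ P.asIdeal ∨ m2 l ∉ P.asIdeal) → c ∉ P.asIdeal := by
        intro l
        have hBfin : {P : MaximalSpectrum (D l) |
            t l ∈ P.asIdeal ∧ (m1 l ∉ P.asIdeal ∨ m2 l ∉ P.asIdeal)}.Finite :=
          (hFfin l).subset fun P hP => hP.1
        have hI : ∀ P ∈ {P : MaximalSpectrum (D l) |
            t l ∈ P.asIdeal ∧ (m1 l ∉ P.asIdeal ∨ m2 l ∉ P.asIdeal)},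
            ¬ Ideal.span ({m1 l, m2 l} : Set (D l)) ≤ P.asIdeal := by
          rintro P ⟨hPt, hPm⟩ hle
          rcases hPm with h | h
          · exact h (hle (Ideal.subset_span (by simp)))
          · exact h (hle (Ideal.subset_span (by simp)))
        obtain ⟨c, hcI, hc⟩ := exists_mem_avoid hBfin _ hI
        exact ⟨c, hcI, fun P hPt hPm => hc P ⟨hPt, hPm⟩⟩
      choose c hcI hc using key
      choose x y hxy using fun l => Ideal.mem_span_pair.mp (hcI l)
      refine ⟨x * m1 + y * m2,
        M.add_mem (M.mul_mem_left x hm1) (M.mul_mem_left y hm2), ?_⟩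
      intro l P hmP htP
      have hcP : c l ∈ P.asIdeal := by
        have : (x * m1 + y * m2) l = c l := hxy l
        rwa [this] at hmP
      have hm1P : m1 l ∈ P.asIdeal := by
        by_contra hcon; exact hc l P htP (Or.inl hcon) hcP
      have hm2P : m2 l ∈ P.asIdeal := by
        by_contra hcon; exact hc l P htP (Or.inr hcon) hcP
      exact ⟨h1 l P hm1P htP, h2 l P hm2P htP⟩
    · -- upward
      rintro Y ⟨m, hm, h⟩ Z hYZ
      exact ⟨m, hm, fun l P hmP htP => hYZ l (h l P hmP htP)⟩
    · -- ultra
      intro Y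
      have key : ∀ l, ∃ r : D l,
          (∀ P : MaximalSpectrum (D l), P ∈ Y l → t l ∈ P.asIdeal → r ∈ P.asIdeal) ∧
          (∀ P : MaximalSpectrum (D l), P ∉ Y l → t l ∈ P.asIdeal → r ∉ P.asIdeal) := by
        intro l
        have hG : ({P : MaximalSpectrum (D l) | P ∈ Y l ∧ t l ∈ P.asIdeal}).Finite :=
          (hFfin l).subset fun P hP => hP.2
        have hF' : ({P : MaximalSpectrum (D l) | P ∉ Y l ∧ t l ∈ P.asIdeal}).Finite :=
          (hFfin l).subset fun P hP => hP.2
        obtain ⟨r, hr1, hr2⟩ := exists_realize hG hF' fun P hP hPG => hP.1 hPG.1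
        exact ⟨r, fun P hPY hPt => hr1 P ⟨hPY, hPt⟩, fun P hPY hPt => hr2 P ⟨hPY, hPt⟩⟩
      choose r hr1 hr2 using key
      by_cases hrM : (r : ∀ l, D l) ∈ M
      · left
        exact ⟨r, hrM, fun l P hrP htP => by_contra fun hPY => hr2 l P hPY htP hrP⟩
      · right
        obtain ⟨y, i, hiM, hyi⟩ := hM.exists_inv hrM
        refine ⟨i, hiM, fun l P hiP htP => ?_⟩
        intro hPY
        have hrP : r l ∈ P.asIdeal := hr1 l P hPY htP
        have heq : y l * r l + i l = 1 := congrFun hyi l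
        have h1P : (1 : D l) ∈ P.asIdeal := by
          rw [← heq]; exact P.asIdeal.add_mem (P.asIdeal.mul_mem_left _ hrP) hiP
        exact P.isMaximal.ne_top ((Ideal.eq_top_iff_one _).mpr h1P)
    · -- finite element
      exact ⟨SFam t, ⟨t, htM, fun l P h _ => h⟩, fun l => hfc l (t l) (ht0 l)⟩
    · -- membership characterization
      intro r
      constructor
      · intro hr; exact ⟨r, hr, fun l P h _ => h⟩
      · rintro ⟨m, hm, h⟩
        by_contra hrM
        obtain ⟨y, i, hiM, hyi⟩ := hM.exists_inv hrM
        refine tripleC m hm t htM i hiM fun l P hP => ?_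
        obtain ⟨h1, h2, h3⟩ := hP
        have hrP : r l ∈ P.asIdeal := h l P h1 h2
        have heq : y l * r l + i l = 1 := congrFun hyi l
        have h1P : (1 : D l) ∈ P.asIdeal := by
          rw [← heq]; exact P.asIdeal.add_mem (P.asIdeal.mul_mem_left _ hrP) h3
        exact P.isMaximal.ne_top ((Ideal.eq_top_iff_one _).mpr h1P)
  · -- Direction 2: ultrafilter gives maximal ideal
    intro U hU hY
    obtain ⟨⟨⟨W0, hW0⟩, hbot, hmeet, hup⟩, hultra⟩ := hU
    obtain ⟨Y0, hY0U, hY0fin⟩ := hY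
    have htop : SFam (0 : ∀ l, D l) ∈ U :=
      hup W0 hW0 _ fun l P _ => (P.asIdeal.zero_mem : (0 : ∀ l, D l) l ∈ P.asIdeal)
    let MI : Ideal (∀ l, D l) :=
      { carrier := {a | SFam a ∈ U}
        zero_mem' := htop
        add_mem' := by
          intro a b ha hb
          refine hup _ (hmeet _ ha _ hb) _ fun l P hP => ?_
          exact (P.asIdeal.add_mem hP.1 hP.2 : (a + b) l ∈ P.asIdeal)
        smul_mem' := by
          intro cc x hx
          refine hup _ hx _ fun l P hP => ?_
          exact (P.asIdeal.mul_mem_left (cc l) hP : (cc • x) l ∈ P.asIdeal) }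
    have hmem : ∀ a : ∀ l, D l, a ∈ MI ↔ SFam a ∈ U := fun a => Iff.rfl
    refine ⟨MI, ?_, hmem⟩
    rw [Ideal.isMaximal_iff]
    constructor
    · intro h1
      have hS1 : SFam (1 : ∀ l, D l) = (⊥ : ∀ l, Set (MaximalSpectrum (D l))) := by
        funext l; ext P
        simp only [SFam, Set.mem_setOf_eq]
        constructor
        · intro hP
          exact P.isMaximal.ne_top ((Ideal.eq_top_iff_one _).mpr hP)
        · intro hP; exact absurd hP (by simp [Bot.bot])
      exact hbot (hS1 ▸ (hmem 1).mp h1)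
    · intro J x hMJ hxM hxJ
      have hxU : (SFam x)ᶜ ∈ U := (hultra (SFam x)).resolve_left hxM
      have hW : Y0 ⊓ (SFam x)ᶜ ∈ U := hmeet _ hY0U _ hxU
      have key : ∀ l, ∃ z : D l, ∀ P : MaximalSpectrum (D l),
          P ∈ (Y0 ⊓ (SFam x)ᶜ) l → 1 - z * x l ∈ P.asIdeal := by
        intro l
        have hWfin : ((Y0 ⊓ (SFam x)ᶜ) l).Finite :=
          (hY0fin l).subset fun P hP => hP.1
        have hsup : Ideal.span ({x l} : Set (D l)) ⊔
            hWfin.toFinset.inf MaximalSpectrum.asIdeal = ⊤ := by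
          by_contra hne
          obtain ⟨Q, hQ, hle⟩ := Ideal.exists_le_maximal _ hne
          have hxQ : x l ∈ Q :=
            hle (le_sup_left (α := Ideal (D l)) (Ideal.subset_span rfl))
          have hIQ : hWfin.toFinset.inf MaximalSpectrum.asIdeal ≤ Q :=
            le_trans le_sup_right hle
          obtain ⟨P, hPs, hPle⟩ := (Ideal.IsPrime.inf_le' hQ.isPrime).mp hIQ
          have heq : P.asIdeal = Q := P.isMaximal.eq_of_le hQ.ne_top hPle
          have hPW : P ∈ (Y0 ⊓ (SFam x)ᶜ) l := hWfin.mem_toFinset.mp hPs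
          exact hPW.2 (show x l ∈ P.asIdeal from heq ▸ hxQ)
        have h1 : (1 : D l) ∈ Ideal.span ({x l} : Set (D l)) ⊔
            hWfin.toFinset.inf MaximalSpectrum.asIdeal := hsup ▸ Submodule.mem_top
        obtain ⟨u, hu, v, hv, huv⟩ := Submodule.mem_sup.mp h1
        obtain ⟨z, hz⟩ := Ideal.mem_span_singleton'.mp hu
        refine ⟨z, fun P hP => ?_⟩
        have hvP : v ∈ P.asIdeal :=
          (Finset.inf_le (hWfin.mem_toFinset.mpr hP) :
            hWfin.toFinset.inf MaximalSpectrum.asIdeal ≤ P.asIdeal) hv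
        have : 1 - z * x l = v := by rw [hz]; linear_combination -huv
        rwa [this]
      choose z hz using key
      have hwU : SFam (1 - z * x) ∈ U :=
        hup _ hW _ fun l P hP => (hz l P hP : (1 - z * x) l ∈ P.asIdeal)
      have h1eq : (1 : ∀ l, D l) = z * x + (1 - z * x) := by ring
      rw [h1eq]
      exact J.add_mem (J.mul_mem_left z hxJ) (hMJ ((hmem _).mpr hwU))
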